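/- arXiv:2404.04288 — 2 statements merged into one kernel-verified Lean document; each statement's English description precedes it below -/
import Mathlib

section
/- Let m : ℝ → ℂ be Lebesgue measurable, let j ∈ ℕ, let b₀,…,b_j ∈ ℂ, N₀,…,N_j ∈ ℕ, and c₀,…,c_j ∈ ℝ with 0 ≤ c_k < log 2 for every k. Let z₀ ∈ ℂ be such that t ↦ e^{-z₀ t} m(t) is Lebesgue integrable on (0,∞), and suppose f : ℂ → ℂ satisfies f(w) = ∫₀^∞ e^{-w t} m(t) dt + ∑_{k=0}^{j} b_k e^{-c_k w} w^{N_k} for every w ∈ ℂ with Re(w) ≥ Re(z₀). Then for every z ∈ ℂ with Re(z) > Re(z₀), the Newton series ∑_{k=0}^{∞} C(z − z₀, k) · Δ^k[f](z₀) converges and its sum equals f(z). -/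
open MeasureTheory Filter Finset Topology

noncomputable section

open fwdDiff

/-- The generalized binomial coefficient `C(w, k) = w (w-1) ⋯ (w-k+1) / k!`. -/
def genBinom (w : ℂ) (k : ℕ) : ℂ :=
  (∏ i ∈ Finset.range k, (w - (i : ℂ))) / (k.factorial : ℂ)

/-- The k-th forward difference (step 1) of `f` at `z₀`. -/
def fwdDiff1 (f : ℂ → ℂ) (z₀ : ℂ) (k : ℕ) : ℂ :=
  ∑ i ∈ Finset.range (k + 1), (k.choose i : ℂ) * (-1) ^ (k - i) * f (z₀ + (i : ℂ))


lemma iteratedDeriv_onePow (v : ℂ) (n : ℕ) {y : ℂ}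
    (hy : 1 + y ∈ Complex.slitPlane) :
    iteratedDeriv n (fun w => Complex.exp (v * Complex.log (1 + w))) y
      = (∏ i ∈ Finset.range n, (v - (i : ℂ))) *
        Complex.exp ((v - n) * Complex.log (1 + y)) := by
  induction n generalizing y with
  | zero => simp
  | succ n ih =>
    rw [iteratedDeriv_succ]
    have hS : IsOpen {w : ℂ | 1 + w ∈ Complex.slitPlane} :=
      Complex.isOpen_slitPlane.preimage (by continuity)
    have hev : iteratedDeriv n (fun w => Complex.exp (v * Complex.log (1 + w)))
        =ᶠ[nhds y] fun w => (∏ i ∈ Finset.range n, (v - (i : ℂ))) *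
          Complex.exp ((v - n) * Complex.log (1 + w)) := by
      filter_upwards [hS.mem_nhds hy] with w hw using ih hw
    rw [hev.deriv_eq]
    have h1 : (1 : ℂ) + y ≠ 0 := Complex.slitPlane_ne_zero hy
    have hd : HasDerivAt (fun w : ℂ => Complex.exp ((v - n) * Complex.log (1 + w)))
        ((v - n) * (1 + y)⁻¹ * Complex.exp ((v - n) * Complex.log (1 + y))) y := by
      have hlog : HasDerivAt (fun w : ℂ => Complex.log (1 + w)) (1 + y)⁻¹ y := by
        have := ((hasDerivAt_id' y).const_add 1).clog hy
        simpa using this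
      have := ((hlog.const_mul (v - n)).cexp)
      refine this.congr_deriv ?_
      ring
    rw [deriv_const_mul _ hd.differentiableAt, hd.deriv]
    rw [Finset.prod_range_succ]
    have hexp : Complex.exp ((v - n) * Complex.log (1 + y))
        = Complex.exp ((v - (n + 1)) * Complex.log (1 + y)) * (1 + y) := by
      have he : (1 + y) = Complex.exp (Complex.log (1 + y)) := (Complex.exp_log h1).symm
      nth_rewrite 3 [he]
      rw [← Complex.exp_add]
      congr 1
      ring
    rw [hexp]
    push_cast
    field_simp

lemma binSeries (v : ℂ) {x : ℂ} (hx : ‖x‖ < 1) :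
    HasSum (fun k => genBinom v k * x ^ k)
      (Complex.exp (v * Complex.log (1 + x))) := by
  have hdiff : DifferentiableOn ℂ (fun w => Complex.exp (v * Complex.log (1 + w)))
      (Metric.ball (0 : ℂ) 1) := by
    intro y hy
    have hy' : 1 + y ∈ Complex.slitPlane := by
      rw [Complex.mem_slitPlane_iff]
      left
      have h2 : ‖y‖ < 1 := by simpa using hy
      have h3 : |y.re| < 1 := lt_of_le_of_lt (Complex.abs_re_le_norm y) h2
      simp only [Complex.add_re, Complex.one_re]
      linarith [abs_lt.mp h3 |>.1]
    have : DifferentiableAt ℂ (fun w : ℂ => 1 + w) y := by fun_prop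
    exact (((Complex.differentiableAt_log hy').comp y this).const_mul v).cexp.differentiableWithinAt
  have H := Complex.hasSum_taylorSeries_on_ball hdiff (by simpa using hx)
  have h0 : ∀ n : ℕ, iteratedDeriv n (fun w => Complex.exp (v * Complex.log (1 + w))) 0
      = ∏ i ∈ Finset.range n, (v - (i : ℂ)) := by
    intro n
    rw [iteratedDeriv_onePow v n (by simp [Complex.one_mem_slitPlane])]
    simp [Complex.log_one]
  refine H.congr_fun fun k => ?_
  rw [h0, genBinom]
  simp only [smul_eq_mul, sub_zero]
  field_simp
lemma genBinom_succ_norm (u : ℂ) (k : ℕ) :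
    ‖genBinom u (k + 1)‖ = ‖genBinom u k‖ * (‖u - k‖ / (k + 1)) := by
  unfold genBinom
  rw [Finset.prod_range_succ, Nat.factorial_succ]
  simp only [Nat.cast_mul, norm_div, norm_mul, Complex.norm_natCast]
  have hf : (k.factorial : ℝ) ≠ 0 := Nat.cast_ne_zero.mpr k.factorial_ne_zero
  have hk1 : ((k:ℝ) + 1) ≠ 0 := by positivity
  push_cast
  field_simp

set_option maxHeartbeats 1000000 in
lemma summable_norm_genBinom {u : ℂ} (hu : 0 < u.re) :
    Summable (fun k => ‖genBinom u k‖) := by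
  set α := u.re with hα
  set β := u.im with hβ
  set K : ℕ := ⌈(β ^ 2 + α ^ 2) / α + α⌉₊ with hK
  set a : ℕ → ℝ := fun k => ‖genBinom u k‖ with ha
  set E : ℕ → ℝ := fun k =>
    Real.exp (-(1 + α / 2) * (Real.log (k + 1) - Real.log (K + 1))) with hE
  -- key ratio bound
  have hratio : ∀ k : ℕ, K ≤ k → ‖u - k‖ / (k + 1) ≤ 1 - (1 + α / 2) / (k + 1) := by
    intro k hk
    have hkR : ((β ^ 2 + α ^ 2) / α + α) ≤ (k : ℝ) :=
      le_trans (Nat.le_ceil _) (by exact_mod_cast Nat.cast_le.mpr hk)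
    have hα2 : (β ^ 2 + α ^ 2) / α ≥ 0 := by positivity
    have hkα : α ≤ (k : ℝ) := by linarith
    have hkβ : β ^ 2 + α ^ 2 ≤ α * k := by
      rw [div_add' _ _ _ (ne_of_gt hu)] at hkR
      calc β ^ 2 + α ^ 2 ≤ β ^ 2 + α ^ 2 + α * α - α * α := by ring_nf; linarith [sq_nonneg α]
        _ ≤ α * k := by
          have := (div_le_iff₀ hu).mp hkR
          nlinarith
    have habs : ‖u - k‖ ≤ (k : ℝ) - α / 2 := by
      have hsq : ‖u - k‖ ^ 2 = (α - k) ^ 2 + β ^ 2 := by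
        rw [Complex.sq_norm, Complex.normSq_apply]
        simp [hα, hβ]
        ring
      nlinarith [norm_nonneg (u - k), sq_nonneg ((k : ℝ) - α / 2)]
    rw [div_le_iff₀ (by positivity : (0:ℝ) < (k:ℝ) + 1)]
    calc ‖u - k‖ ≤ (k : ℝ) - α / 2 := habs
      _ = (1 - (1 + α / 2) / (k + 1)) * (k + 1) := by field_simp; ring
  -- inductive bound a k ≤ a K * E k for k ≥ K
  have hbound : ∀ k : ℕ, K ≤ k → a k ≤ a K * E k := by
    intro k hk
    induction k with
    | zero =>
      have : K = 0 := Nat.le_zero.mp hk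
      simp [this, hE]
    | succ k ih =>
      rcases Nat.lt_or_ge K (k + 1) with h | h
      · have hk' : K ≤ k := Nat.lt_succ_iff.mp h
        have hstep : a (k + 1) ≤ a k * (1 - (1 + α / 2) / (k + 1)) := by
          rw [ha]
          simp only
          rw [genBinom_succ_norm]
          exact mul_le_mul_of_nonneg_left (hratio k hk') (norm_nonneg _)
        have h1 : (1 : ℝ) - (1 + α / 2) / (k + 1) ≤ Real.exp (-((1 + α / 2) / (k + 1))) := by
          have := Real.add_one_le_exp (-((1 + α / 2) / (k + 1)))
          linarith
        have h2 : Real.log (k + 1 + 1) - Real.log (k + 1) ≤ 1 / (k + 1) := by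
          have hpos : (0:ℝ) < (k:ℝ) + 1 := by positivity
          rw [← Real.log_div (by positivity) (ne_of_gt hpos)]
          calc Real.log ((k + 1 + 1) / (k + 1)) ≤ (k + 1 + 1) / (k + 1) - 1 :=
            Real.log_le_sub_one_of_pos (by positivity)
            _ = 1 / (k + 1) := by field_simp; ring
        have hEstep : E k * Real.exp (-((1 + α / 2) / (k + 1))) ≤ E (k + 1) := by
          rw [hE]
          simp only
          rw [← Real.exp_add]
          apply Real.exp_le_exp.mpr
          have hαpos : 0 < 1 + α / 2 := by linarith
          have := mul_le_mul_of_nonneg_left h2 (le_of_lt hαpos)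
          push_cast
          rw [mul_one_div] at this
          nlinarith
        have hnn : (0:ℝ) ≤ 1 - (1 + α / 2) / (k + 1) := by
          have h0 : (0:ℝ) ≤ ‖u - k‖ / (k + 1) := by positivity
          linarith [hratio k hk']
        calc a (k + 1) ≤ a k * (1 - (1 + α / 2) / (k + 1)) := hstep
          _ ≤ (a K * E k) * (1 - (1 + α / 2) / (k + 1)) :=
            mul_le_mul_of_nonneg_right (ih hk') hnn
          _ ≤ (a K * E k) * Real.exp (-((1 + α / 2) / (k + 1))) := by
            apply mul_le_mul_of_nonneg_left h1
            positivity
          _ = a K * (E k * Real.exp (-((1 + α / 2) / (k + 1)))) := by ring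
          _ ≤ a K * E (k + 1) := by
            apply mul_le_mul_of_nonneg_left hEstep
            positivity
      · -- K = k + 1
        have : K = k + 1 := le_antisymm hk h
        rw [← this]
        simp [hE]
    -- summability of E
  have hEsum : Summable E := by
    have h1 : Summable (fun k : ℕ => ((k : ℝ) + 1) ^ (-(1 + α / 2))) := by
      have h0 := (Real.summable_nat_rpow (p := -(1 + α / 2))).mpr (by linarith)
      have h2 := (summable_nat_add_iff 1).mpr h0
      refine h2.congr fun k => ?_
      push_cast
      rfl
    have : E = fun k : ℕ =>
        Real.exp ((1 + α / 2) * Real.log (K + 1)) * ((k : ℝ) + 1) ^ (-(1 + α / 2)) := by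
      funext k
      rw [hE]
      simp only
      rw [Real.rpow_def_of_pos (by positivity), ← Real.exp_add]
      congr 1
      push_cast
      ring
    rw [this]
    exact h1.mul_left _
  -- conclude
  have hsum_shift : Summable (fun k : ℕ => a (k + K)) := by
    apply Summable.of_nonneg_of_le (fun k => norm_nonneg _)
      (fun k => hbound (k + K) (Nat.le_add_left _ _))
    exact ((summable_nat_add_iff K).mpr (hEsum.mul_left (a K)))
  exact (summable_nat_add_iff K).mp hsum_shift
lemma prodCastSub (n q : ℕ) :
    ∏ i ∈ Finset.range q, ((n : ℂ) - (i : ℂ)) = (n.descFactorial q : ℂ) := by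
  induction q with
  | zero => simp
  | succ q ih =>
    rw [Finset.prod_range_succ, ih, Nat.descFactorial_succ]
    rcases le_or_gt q n with h | h
    · rw [Nat.cast_mul, Nat.cast_sub h]; ring
    · have h0 : n.descFactorial q = 0 := Nat.descFactorial_eq_zero_iff_lt.mpr h
      simp [h0]

lemma genBinom_natCast (n q : ℕ) : genBinom (n : ℂ) q = (n.choose q : ℂ) := by
  unfold genBinom
  rw [prodCastSub, Nat.descFactorial_eq_factorial_mul_choose]
  have : ((q.factorial : ℂ)) ≠ 0 := Nat.cast_ne_zero.mpr q.factorial_ne_zero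
  push_cast
  field_simp

lemma descPochhammer_eval_prod (q : ℕ) (u : ℂ) :
    (descPochhammer ℂ q).eval u = ∏ i ∈ Finset.range q, (u - (i : ℂ)) := by
  induction q with
  | zero => simp
  | succ q ih =>
    rw [descPochhammer_succ_right, Finset.prod_range_succ, ← ih]
    simp [Polynomial.eval_mul]

lemma fwdDiff_iter_zero_fun (q : ℕ) : (Δ_[1])^[q] (0 : ℕ → ℂ) = 0 := by
  induction q with
  | zero => rfl
  | succ q ih =>
    rw [Function.iterate_succ_apply]
    have : Δ_[1] (0 : ℕ → ℂ) = 0 := by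
      funext s; simp [fwdDiff]
    rw [this, ih]

lemma fwdDiff_iter_pow_eq_zero (N : ℕ) :
    ∀ (q : ℕ), N < q → ∀ (w : ℂ), (Δ_[1])^[q] (fun s : ℕ => (w + (s : ℂ)) ^ N) = 0 := by
  induction N using Nat.strong_induction_on with
  | _ N IH =>
    intro q hq w
    obtain ⟨q', rfl⟩ : ∃ q', q = q' + 1 := ⟨q - 1, by omega⟩
    rw [Function.iterate_succ_apply]
    have hΔ : Δ_[1] (fun s : ℕ => (w + (s : ℂ)) ^ N)
        = ∑ p ∈ Finset.range N, fun s : ℕ => (N.choose p : ℂ) * (w + (s : ℂ)) ^ p := by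
      funext s
      have hexp : (w + ((s + 1 : ℕ) : ℂ)) ^ N
          = ∑ p ∈ Finset.range (N + 1), (w + (s : ℂ)) ^ p * (N.choose p : ℂ) := by
        push_cast
        rw [show w + ((s : ℂ) + 1) = (w + s) + 1 by ring, add_pow]
        simp
      simp only [fwdDiff, Finset.sum_apply]
      rw [hexp, Finset.sum_range_succ, Nat.choose_self, Nat.cast_one, mul_one,
        add_sub_cancel_right]
      exact Finset.sum_congr rfl fun p _ => mul_comm _ _
    rw [hΔ, fwdDiff_iter_finset_sum]
    have : ∀ p ∈ Finset.range N,
        (Δ_[1])^[q'] (fun s : ℕ => (N.choose p : ℂ) * (w + (s : ℂ)) ^ p) = 0 := by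
      intro p hp
      have hp' : p < N := Finset.mem_range.mp hp
      have : (fun s : ℕ => (N.choose p : ℂ) * (w + (s : ℂ)) ^ p)
          = (N.choose p : ℂ) • (fun s : ℕ => (w + (s : ℂ)) ^ p) := by
        funext s; simp [smul_eq_mul]
      rw [this, fwdDiff_iter_const_smul, IH p hp' q' (by omega) w, smul_zero]
    rw [Finset.sum_congr rfl this]
    simp

lemma newton_poly (w : ℂ) (N : ℕ) (u : ℂ) :
    (w + u) ^ N = ∑ q ∈ Finset.range (N + 1),
      genBinom u q * ((Δ_[1])^[q] (fun s : ℕ => (w + (s : ℂ)) ^ N) 0) := by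
  set d : ℕ → ℂ := fun q => (Δ_[1])^[q] (fun s : ℕ => (w + (s : ℂ)) ^ N) 0 with hd
  have hdzero : ∀ q, N < q → d q = 0 := by
    intro q hq
    rw [hd]
    simp only
    rw [fwdDiff_iter_pow_eq_zero N q hq w]
    rfl
  set P : Polynomial ℂ := ∑ q ∈ Finset.range (N + 1),
    Polynomial.C (d q / (q.factorial : ℂ)) * descPochhammer ℂ q with hP
  set Q : Polynomial ℂ := (Polynomial.X + Polynomial.C w) ^ N with hQ
  have hPev : ∀ v : ℂ, P.eval v
      = ∑ q ∈ Finset.range (N + 1), (d q / (q.factorial : ℂ)) *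
        ∏ i ∈ Finset.range q, (v - (i : ℂ)) := by
    intro v
    rw [hP, Polynomial.eval_finset_sum]
    exact Finset.sum_congr rfl fun q _ => by
      rw [Polynomial.eval_mul, Polynomial.eval_C, descPochhammer_eval_prod]
  have hQev : ∀ v : ℂ, Q.eval v = (w + v) ^ N := by
    intro v; rw [hQ]; simp [add_comm]
  have key : ∀ n : ℕ, P.eval ((n : ℂ)) = Q.eval ((n : ℂ)) := by
    intro n
    -- Gregory-Newton on ℕ
    have hGN : (w + (n : ℂ)) ^ N
        = ∑ q ∈ Finset.range (n + 1), (n.choose q : ℂ) * d q := by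
      have := shift_eq_sum_fwdDiff_iter (1 : ℕ) (fun s : ℕ => (w + (s : ℂ)) ^ N) n 0
      simp only [zero_add, smul_eq_mul, nsmul_eq_mul, mul_one] at this
      exact this
    -- both sums equal the sum over range (max N n + 1)
    set M := max N n with hM
    have hext1 : ∑ q ∈ Finset.range (N + 1), (n.choose q : ℂ) * d q
        = ∑ q ∈ Finset.range (M + 1), (n.choose q : ℂ) * d q := by
      apply Finset.sum_subset
      · exact Finset.range_subset_range.mpr (by omega)
      · intro q _ hq
        have : N < q := by simp at hq ⊢; omega
        rw [hdzero q this, mul_zero]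
    have hext2 : ∑ q ∈ Finset.range (n + 1), (n.choose q : ℂ) * d q
        = ∑ q ∈ Finset.range (M + 1), (n.choose q : ℂ) * d q := by
      apply Finset.sum_subset
      · exact Finset.range_subset_range.mpr (by omega)
      · intro q _ hq
        have : n < q := by simp at hq ⊢; omega
        rw [Nat.choose_eq_zero_of_lt this]
        simp
    rw [hPev, hQev, hGN, hext2, ← hext1]
    apply Finset.sum_congr rfl
    intro q _
    rw [prodCastSub, Nat.descFactorial_eq_factorial_mul_choose]
    have hfac : ((q.factorial : ℂ)) ≠ 0 := Nat.cast_ne_zero.mpr q.factorial_ne_zero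
    push_cast
    field_simp
  have hPQ : P = Q := by
    apply Polynomial.eq_of_infinite_eval_eq
    exact Set.infinite_of_injective_forall_mem (f := fun n : ℕ => (n : ℂ))
      Nat.cast_injective (fun n => key n)
  have := congrArg (Polynomial.eval u) hPQ
  rw [hPev, hQev] at this
  rw [← this]
  apply Finset.sum_congr rfl
  intro q _
  rw [genBinom]
  ring

lemma binSeries_exp (v : ℂ) {t : ℝ} (ht : 0 ≤ t) :
    HasSum (fun k => genBinom v k * (Complex.exp (-(t : ℂ)) - 1) ^ k)
      (Complex.exp (-v * t)) := by
  have hxe : Complex.exp (-(t : ℂ)) = ((Real.exp (-t) : ℝ) : ℂ) := by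
    rw [Complex.ofReal_exp]; norm_cast
  have h1 : Real.exp (-t) ≤ 1 := Real.exp_le_one_iff.mpr (by linarith)
  have h2 : (0:ℝ) < Real.exp (-t) := Real.exp_pos _
  have hx : ‖Complex.exp (-(t : ℂ)) - 1‖ < 1 := by
    rw [hxe, show ((Real.exp (-t) : ℝ) : ℂ) - 1 = ((Real.exp (-t) - 1 : ℝ) : ℂ) by push_cast; ring,
      Complex.norm_real, Real.norm_eq_abs]
    rw [abs_of_nonpos (by linarith)]
    linarith
  have H := binSeries v hx
  have hval : Complex.exp (v * Complex.log (1 + (Complex.exp (-(t : ℂ)) - 1)))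
      = Complex.exp (-v * t) := by
    rw [show (1 : ℂ) + (Complex.exp (-(t : ℂ)) - 1) = Complex.exp (-(t:ℂ)) by ring, hxe,
      ← Complex.ofReal_log h2.le, Real.log_exp]
    push_cast
    ring_nf
  rwa [hval] at H

lemma genBinom_add (u : ℂ) (q r : ℕ) :
    genBinom u (q + r) * (((q + r).choose q : ℕ) : ℂ)
      = genBinom u q * genBinom (u - (q : ℂ)) r := by
  unfold genBinom
  rw [Finset.prod_range_add]
  have h1 : ∏ i ∈ Finset.range r, (u - ((q + i : ℕ) : ℂ))
      = ∏ i ∈ Finset.range r, ((u - (q : ℂ)) - (i : ℂ)) :=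
    Finset.prod_congr rfl fun i _ => by push_cast; ring
  rw [h1]
  have key : (((q + r).choose q : ℕ) : ℂ) * (q.factorial : ℂ) * (r.factorial : ℂ)
      = ((q + r).factorial : ℂ) := by
    rw [Nat.choose_symm_add]
    exact_mod_cast congrArg (Nat.cast : ℕ → ℂ)
      (Nat.add_choose_mul_factorial_mul_factorial q r)
  have hq : ((q.factorial : ℂ)) ≠ 0 := Nat.cast_ne_zero.mpr q.factorial_ne_zero
  have hr : ((r.factorial : ℂ)) ≠ 0 := Nat.cast_ne_zero.mpr r.factorial_ne_zero
  have hqr : (((q+r).factorial : ℂ)) ≠ 0 := Nat.cast_ne_zero.mpr (q+r).factorial_ne_zero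
  field_simp
  linear_combination ((∏ i ∈ Finset.range q, (u - (i:ℂ))) *
    (∏ i ∈ Finset.range r, (u - (q:ℂ) - (i:ℂ)))) * key

lemma sub_one_pow (x : ℂ) (n : ℕ) :
    (x - 1) ^ n = ∑ i ∈ Finset.range (n + 1), (n.choose i : ℂ) * (-1) ^ (n - i) * x ^ i := by
  rw [sub_eq_add_neg, add_pow]
  exact Finset.sum_congr rfl fun i _ => by rw [neg_one_pow_eq_pow_mod_two]; ring_nf

lemma key_sum (x : ℂ) (k q : ℕ) :
    ∑ i ∈ Finset.range (k + 1), (k.choose i : ℂ) * (-1) ^ (k - i) * ((i.choose q : ℂ) * x ^ i)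
      = (k.choose q : ℂ) * x ^ q * (x - 1) ^ (k - q) := by
  rcases le_or_gt q k with h | h
  · have hsub : Finset.Ico q (k+1) ⊆ Finset.range (k+1) := by
      rw [Finset.range_eq_Ico]; exact Finset.Ico_subset_Ico (Nat.zero_le _) le_rfl
    rw [← Finset.sum_subset hsub (fun i hi hni => by
      have hiq : i < q := by
        simp only [Finset.mem_range] at hi
        simp only [Finset.mem_Ico, not_and, not_le] at hni
        omega
      rw [Nat.choose_eq_zero_of_lt hiq]
      simp)]
    rw [Finset.sum_Ico_eq_sum_range]
    have hlen : k + 1 - q = (k - q) + 1 := by omega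
    rw [hlen, sub_one_pow x (k - q), Finset.mul_sum]
    apply Finset.sum_congr rfl
    intro r hr
    have hr' : r ≤ k - q := by simp only [Finset.mem_range] at hr; omega
    have hcc : (k.choose (q+r) : ℂ) * ((q+r).choose q : ℂ)
        = (k.choose q : ℂ) * ((k-q).choose r : ℂ) := by
      have h0 := Nat.choose_mul (n := k) (show q ≤ q + r by omega)
      rw [show q + r - q = r by omega] at h0
      exact_mod_cast congrArg (Nat.cast : ℕ → ℂ) h0
    have hpow : k - (q + r) = (k - q) - r := by omega
    rw [hpow, pow_add x q r]
    linear_combination ((-1 : ℂ)^((k-q)-r) * x^q * x^r) * hcc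
  · rw [Nat.choose_eq_zero_of_lt h]
    simp only [Nat.cast_zero, zero_mul]
    apply Finset.sum_eq_zero
    intro i hi
    have hiq : i < q := by simp only [Finset.mem_range] at hi; omega
    rw [Nat.choose_eq_zero_of_lt hiq]
    ring


lemma hasSum_partB (z₀ u : ℂ) {c : ℝ} (hc : 0 ≤ c) (N : ℕ) :
    HasSum (fun k => genBinom u k *
        fwdDiff1 (fun w => Complex.exp (-(c : ℂ) * w) * w ^ N) z₀ k)
      (Complex.exp (-(c : ℂ) * (z₀ + u)) * (z₀ + u) ^ N) := by
  set x : ℂ := Complex.exp (-(c : ℂ)) with hxdef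
  set d : ℕ → ℂ := fun q => (Δ_[1])^[q] (fun s : ℕ => (z₀ + (s : ℂ)) ^ N) 0 with hddef
  set E : ℂ := Complex.exp (-(c : ℂ) * z₀) with hEdef
  -- rewrite the k-th summand
  have hrew : ∀ k, fwdDiff1 (fun w => Complex.exp (-(c : ℂ) * w) * w ^ N) z₀ k
      = ∑ q ∈ Finset.range (N + 1),
          (E * d q) * ((k.choose q : ℂ) * x ^ q * (x - 1) ^ (k - q)) := by
    intro k
    unfold fwdDiff1
    have hterm : ∀ i : ℕ, Complex.exp (-(c : ℂ) * (z₀ + (i : ℂ))) * (z₀ + (i : ℂ)) ^ N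
        = ∑ q ∈ Finset.range (N + 1), E * d q * ((i.choose q : ℂ) * x ^ i) := by
      intro i
      have h1 : Complex.exp (-(c : ℂ) * (z₀ + (i : ℂ))) = E * x ^ i := by
        rw [hEdef, hxdef, ← Complex.exp_nat_mul, ← Complex.exp_add]
        congr 1
        ring
      have h2 : (z₀ + (i : ℂ)) ^ N = ∑ q ∈ Finset.range (N + 1), (i.choose q : ℂ) * d q := by
        rw [newton_poly z₀ N (i : ℂ)]
        exact Finset.sum_congr rfl fun q _ => by rw [genBinom_natCast]
      rw [h1, h2, Finset.mul_sum]
      exact Finset.sum_congr rfl fun q _ => by ring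
    have hstep : ∀ i ∈ Finset.range (k + 1),
        (k.choose i : ℂ) * (-1) ^ (k - i) *
          (Complex.exp (-(c : ℂ) * (z₀ + (i : ℂ))) * (z₀ + (i : ℂ)) ^ N)
        = ∑ q ∈ Finset.range (N + 1),
            (E * d q) * ((k.choose i : ℂ) * (-1) ^ (k - i) * ((i.choose q : ℂ) * x ^ i)) := by
      intro i _
      rw [hterm i, Finset.mul_sum]
      exact Finset.sum_congr rfl fun q _ => by ring
    rw [Finset.sum_congr rfl hstep, Finset.sum_comm]
    exact Finset.sum_congr rfl fun q _ => by rw [← Finset.mul_sum, key_sum]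
  -- HasSum for each q
  have hq : ∀ q, HasSum
      (fun k => genBinom u k * ((k.choose q : ℂ) * x ^ q * (x - 1) ^ (k - q)))
      (genBinom u q * x ^ q * Complex.exp (-(u - (q : ℂ)) * c)) := by
    intro q
    have hbs := binSeries_exp (u - (q : ℂ)) hc
    have h1 : HasSum
        (fun r => (genBinom u q * x ^ q) * (genBinom (u - (q : ℂ)) r * (x - 1) ^ r))
        ((genBinom u q * x ^ q) * Complex.exp (-(u - (q : ℂ)) * c)) := by
      exact hbs.mul_left (genBinom u q * x ^ q)
    have h2 : ∀ r : ℕ,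
        genBinom u (r + q) * (((r + q).choose q : ℂ) * x ^ q * (x - 1) ^ ((r + q) - q))
        = (genBinom u q * x ^ q) * (genBinom (u - (q : ℂ)) r * (x - 1) ^ r) := by
      intro r
      have hga := genBinom_add u q r
      rw [show r + q = q + r by omega, Nat.add_sub_cancel_left]
      linear_combination (x ^ q * (x - 1) ^ r) * hga
    have h3 : HasSum (fun r : ℕ =>
        genBinom u (r + q) * (((r + q).choose q : ℂ) * x ^ q * (x - 1) ^ ((r + q) - q)))
        ((genBinom u q * x ^ q) * Complex.exp (-(u - (q : ℂ)) * c)) :=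
      h1.congr_fun fun r => (h2 r)
    have h4 := (hasSum_nat_add_iff
      (f := fun k => genBinom u k * ((k.choose q : ℂ) * x ^ q * (x - 1) ^ (k - q))) q).mp h3
    have h5 : ∑ i ∈ Finset.range q,
        genBinom u i * ((i.choose q : ℂ) * x ^ q * (x - 1) ^ (i - q)) = 0 := by
      apply Finset.sum_eq_zero
      intro i hi
      rw [Nat.choose_eq_zero_of_lt (Finset.mem_range.mp hi)]
      ring
    rw [h5, add_zero] at h4
    exact h4
  -- combine over q
  have hcomb := hasSum_sum (s := Finset.range (N + 1))
    (f := fun q k => (E * d q) * (genBinom u k * ((k.choose q : ℂ) * x ^ q * (x - 1) ^ (k - q))))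
    (a := fun q => (E * d q) * (genBinom u q * x ^ q * Complex.exp (-(u - (q : ℂ)) * c)))
    (fun q _ => (hq q).mul_left _)
  have hfun : ∀ k, ∑ q ∈ Finset.range (N + 1),
      (E * d q) * (genBinom u k * ((k.choose q : ℂ) * x ^ q * (x - 1) ^ (k - q)))
      = genBinom u k * fwdDiff1 (fun w => Complex.exp (-(c : ℂ) * w) * w ^ N) z₀ k := by
    intro k
    rw [hrew k, Finset.mul_sum]
    exact Finset.sum_congr rfl fun q _ => by ring
  have hval : ∑ q ∈ Finset.range (N + 1),
      (E * d q) * (genBinom u q * x ^ q * Complex.exp (-(u - (q : ℂ)) * c))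
      = Complex.exp (-(c : ℂ) * (z₀ + u)) * (z₀ + u) ^ N := by
    have hxq : ∀ q : ℕ, x ^ q * Complex.exp (-(u - (q : ℂ)) * c)
        = Complex.exp (-u * c) := by
      intro q
      rw [hxdef, ← Complex.exp_nat_mul, ← Complex.exp_add]
      congr 1
      push_cast
      ring
    have : ∀ q ∈ Finset.range (N + 1),
        (E * d q) * (genBinom u q * x ^ q * Complex.exp (-(u - (q : ℂ)) * c))
        = (E * Complex.exp (-u * c)) * (genBinom u q * d q) := by
      intro q _
      rw [show genBinom u q * x ^ q * Complex.exp (-(u - (q : ℂ)) * c)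
          = genBinom u q * (x ^ q * Complex.exp (-(u - (q : ℂ)) * c)) by ring, hxq q]
      ring
    rw [Finset.sum_congr rfl this, ← Finset.mul_sum, ← newton_poly z₀ N u]
    rw [hEdef, ← Complex.exp_add]
    congr 1
    ring
  rw [hval] at hcomb
  exact hcomb.congr_fun fun k => (hfun k).symm

lemma norm_cexp_mul (w : ℂ) (t : ℝ) : ‖Complex.exp (-w * t)‖ = Real.exp (-w.re * t) := by
  rw [Complex.norm_exp]
  congr 1
  simp [Complex.mul_re]

lemma norm_exp_sub_one_le {t : ℝ} (ht : 0 ≤ t) : ‖Complex.exp (-(t : ℂ)) - 1‖ ≤ 1 := by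
  have hxe : Complex.exp (-(t : ℂ)) = ((Real.exp (-t) : ℝ) : ℂ) := by
    rw [Complex.ofReal_exp]; norm_cast
  have h1 : Real.exp (-t) ≤ 1 := Real.exp_le_one_iff.mpr (by linarith)
  have h2 : (0:ℝ) < Real.exp (-t) := Real.exp_pos _
  rw [hxe, show ((Real.exp (-t) : ℝ) : ℂ) - 1 = ((Real.exp (-t) - 1 : ℝ) : ℂ) by push_cast; ring,
    Complex.norm_real, Real.norm_eq_abs, abs_of_nonpos (by linarith)]
  linarith

section PartA

variable {m : ℝ → ℂ} (hm : Measurable m) {z₀ : ℂ}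
  (hint : IntegrableOn (fun t : ℝ => Complex.exp (-z₀ * t) * m t) (Set.Ioi 0))

include hm hint in
lemma integrable_dom (g : ℝ → ℂ) (hg : Measurable g)
    (hbd : ∀ t ∈ Set.Ioi (0:ℝ), ‖g t‖ ≤ ‖Complex.exp (-z₀ * t)‖) :
    IntegrableOn (fun t : ℝ => g t * m t) (Set.Ioi 0) := by
  apply Integrable.mono' hint.norm ((hg.mul hm).aestronglyMeasurable)
  rw [ae_restrict_iff' measurableSet_Ioi]
  filter_upwards with t ht
  rw [Pi.mul_apply, norm_mul, norm_mul]
  exact mul_le_mul_of_nonneg_right (hbd t ht) (norm_nonneg (m t))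

include hm hint in
lemma integrable_shift (i : ℕ) :
    IntegrableOn (fun t : ℝ => Complex.exp (-(z₀ + (i:ℂ)) * t) * m t) (Set.Ioi 0) := by
  apply integrable_dom hm hint
  · fun_prop
  · intro t ht
    rw [norm_cexp_mul, norm_cexp_mul]
    apply Real.exp_le_exp.mpr
    have ht' : (0:ℝ) ≤ t := (le_of_lt (Set.mem_Ioi.mp ht))
    have : (z₀ + (i:ℂ)).re = z₀.re + i := by simp
    rw [this]
    nlinarith [Nat.cast_nonneg (α := ℝ) i]

include hm hint in
set_option maxHeartbeats 1000000 in
lemma integrable_kernel (k : ℕ) :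
    IntegrableOn (fun t : ℝ =>
      Complex.exp (-z₀ * t) * (Complex.exp (-(t:ℂ)) - 1) ^ k * m t) (Set.Ioi 0) := by
  apply integrable_dom hm hint
    (g := fun t : ℝ => Complex.exp (-z₀ * t) * (Complex.exp (-(t:ℂ)) - 1) ^ k)
  · fun_prop
  · intro t ht
    have ht' : (0:ℝ) ≤ t := le_of_lt (Set.mem_Ioi.mp ht)
    rw [norm_mul]
    have h1 : ‖(Complex.exp (-(t:ℂ)) - 1) ^ k‖ ≤ 1 := by
      rw [norm_pow]
      exact pow_le_one₀ (norm_nonneg _) (norm_exp_sub_one_le ht')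
    nlinarith [norm_nonneg (Complex.exp (-z₀ * (t:ℂ)))]

include hm hint in
lemma fwdDiff1_laplace (k : ℕ) :
    fwdDiff1 (fun w => ∫ t in Set.Ioi (0:ℝ), Complex.exp (-w * t) * m t) z₀ k
      = ∫ t in Set.Ioi (0:ℝ),
          Complex.exp (-z₀ * t) * (Complex.exp (-(t:ℂ)) - 1) ^ k * m t := by
  unfold fwdDiff1
  have hstep : ∀ i ∈ Finset.range (k+1), (k.choose i : ℂ) * (-1) ^ (k - i) *
        (∫ t in Set.Ioi (0:ℝ), Complex.exp (-(z₀ + (i:ℂ)) * t) * m t)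
      = ∫ t in Set.Ioi (0:ℝ), (k.choose i : ℂ) * (-1) ^ (k - i) *
          (Complex.exp (-(z₀ + (i:ℂ)) * t) * m t) := by
    intro i _
    rw [integral_const_mul]
  rw [Finset.sum_congr rfl hstep, ← MeasureTheory.integral_finset_sum _
    (fun i _ => ((integrable_shift hm hint i).const_mul _))]
  apply setIntegral_congr_fun measurableSet_Ioi
  intro t ht
  simp only
  rw [sub_one_pow, Finset.mul_sum, Finset.sum_mul]
  apply Finset.sum_congr rfl
  intro i _
  have hexp : Complex.exp (-(z₀ + (i:ℂ)) * t)
      = Complex.exp (-z₀ * t) * Complex.exp (-(t:ℂ)) ^ i := by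
    rw [← Complex.exp_nat_mul, ← Complex.exp_add]
    congr 1
    ring
  rw [hexp]
  ring

include hm hint in
lemma partA {u : ℂ} (hu : 0 < u.re) :
    Tendsto (fun n : ℕ => ∑ k ∈ Finset.range n, genBinom u k *
        fwdDiff1 (fun w => ∫ t in Set.Ioi (0:ℝ), Complex.exp (-w * t) * m t) z₀ k)
      atTop (nhds (∫ t in Set.Ioi (0:ℝ), Complex.exp (-(z₀ + u) * t) * m t)) := by
  have hMs := summable_norm_genBinom hu
  set M : ℝ := ∑' k, ‖genBinom u k‖ with hM
  -- rewrite partial sums as integrals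
  have hAn : ∀ n : ℕ, ∑ k ∈ Finset.range n, genBinom u k *
      fwdDiff1 (fun w => ∫ t in Set.Ioi (0:ℝ), Complex.exp (-w * t) * m t) z₀ k
      = ∫ t in Set.Ioi (0:ℝ), Complex.exp (-z₀ * t) *
          (∑ k ∈ Finset.range n, genBinom u k * (Complex.exp (-(t:ℂ)) - 1) ^ k) * m t := by
    intro n
    have h1 : ∀ k ∈ Finset.range n, genBinom u k *
        fwdDiff1 (fun w => ∫ t in Set.Ioi (0:ℝ), Complex.exp (-w * t) * m t) z₀ k
        = ∫ t in Set.Ioi (0:ℝ), genBinom u k *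
            (Complex.exp (-z₀ * t) * (Complex.exp (-(t:ℂ)) - 1) ^ k * m t) := by
      intro k _
      rw [fwdDiff1_laplace hm hint k, integral_const_mul]
    rw [Finset.sum_congr rfl h1, ← MeasureTheory.integral_finset_sum _
      (fun k _ => ((integrable_kernel hm hint k).const_mul _))]
    apply setIntegral_congr_fun measurableSet_Ioi
    intro t ht
    simp only
    rw [Finset.mul_sum, Finset.sum_mul]
    apply Finset.sum_congr rfl
    intro k _
    ring
  have hfun : (fun n : ℕ => ∑ k ∈ Finset.range n, genBinom u k *
      fwdDiff1 (fun w => ∫ t in Set.Ioi (0:ℝ), Complex.exp (-w * t) * m t) z₀ k)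
      = fun n : ℕ => ∫ t in Set.Ioi (0:ℝ), Complex.exp (-z₀ * t) *
          (∑ k ∈ Finset.range n, genBinom u k * (Complex.exp (-(t:ℂ)) - 1) ^ k) * m t :=
    funext hAn
  rw [hfun]
  -- dominated convergence
  apply tendsto_integral_of_dominated_convergence
    (fun t : ℝ => M * ‖Complex.exp (-z₀ * t) * m t‖)
  · intro n
    apply Measurable.aestronglyMeasurable
    fun_prop
  · exact (hint.norm.const_mul M)
  · intro n
    rw [ae_restrict_iff' measurableSet_Ioi]
    filter_upwards with t ht
    have ht' : (0:ℝ) ≤ t := le_of_lt (Set.mem_Ioi.mp ht)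
    rw [norm_mul, norm_mul, norm_mul]
    have hP : ‖∑ k ∈ Finset.range n, genBinom u k * (Complex.exp (-(t:ℂ)) - 1) ^ k‖ ≤ M := by
      calc ‖∑ k ∈ Finset.range n, genBinom u k * (Complex.exp (-(t:ℂ)) - 1) ^ k‖
          ≤ ∑ k ∈ Finset.range n, ‖genBinom u k * (Complex.exp (-(t:ℂ)) - 1) ^ k‖ :=
            norm_sum_le _ _
        _ ≤ ∑ k ∈ Finset.range n, ‖genBinom u k‖ := by
            apply Finset.sum_le_sum
            intro k _
            rw [norm_mul, norm_pow]
            calc ‖genBinom u k‖ * ‖Complex.exp (-(t:ℂ)) - 1‖ ^ k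
                ≤ ‖genBinom u k‖ * 1 :=
                  mul_le_mul_of_nonneg_left
                    (pow_le_one₀ (norm_nonneg _) (norm_exp_sub_one_le ht')) (norm_nonneg _)
              _ = ‖genBinom u k‖ := mul_one _
        _ ≤ M := Summable.sum_le_tsum _ (fun k _ => norm_nonneg _) hMs
    calc ‖Complex.exp (-z₀ * t)‖ * ‖∑ k ∈ Finset.range n, genBinom u k *
          (Complex.exp (-(t:ℂ)) - 1) ^ k‖ * ‖m t‖
        ≤ ‖Complex.exp (-z₀ * t)‖ * M * ‖m t‖ := by
          apply mul_le_mul_of_nonneg_right _ (norm_nonneg _)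
          exact mul_le_mul_of_nonneg_left hP (norm_nonneg _)
      _ = M * (‖Complex.exp (-z₀ * t)‖ * ‖m t‖) := by ring
  · rw [ae_restrict_iff' measurableSet_Ioi]
    filter_upwards with t ht
    have ht' : (0:ℝ) ≤ t := le_of_lt (Set.mem_Ioi.mp ht)
    have hbs := (binSeries_exp u ht').tendsto_sum_nat
    have := (hbs.const_mul (Complex.exp (-z₀ * t))).mul_const (m t)
    have heq : Complex.exp (-z₀ * t) * Complex.exp (-u * t) * m t
        = Complex.exp (-(z₀ + u) * t) * m t := by
      rw [← Complex.exp_add]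
      congr 2
      ring
    rw [heq] at this
    exact this

end PartA

theorem newton_series_converges
    (m : ℝ → ℂ) (hm : Measurable m) (j : ℕ) (b : ℕ → ℂ) (N : ℕ → ℕ)
    (c : ℕ → ℝ) (hc : ∀ k ≤ j, 0 ≤ c k ∧ c k < Real.log 2) (z₀ : ℂ)
    (hint : IntegrableOn (fun t : ℝ => Complex.exp (-z₀ * t) * m t) (Set.Ioi 0))
    (f : ℂ → ℂ)
    (hf : ∀ w : ℂ, z₀.re ≤ w.re →
      f w = (∫ t in Set.Ioi (0 : ℝ), Complex.exp (-w * t) * m t)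
        + ∑ k ∈ Finset.range (j + 1), b k * Complex.exp (-(c k : ℂ) * w) * w ^ (N k))
    (z : ℂ) (hz : z₀.re < z.re) :
    Tendsto (fun n : ℕ =>
        ∑ k ∈ Finset.range n, genBinom (z - z₀) k * fwdDiff1 f z₀ k)
      atTop (nhds (f z)) := by
  set u : ℂ := z - z₀ with hu
  have hure : 0 < u.re := by
    rw [hu, Complex.sub_re]
    linarith
  set F : ℂ → ℂ := fun w => ∫ t in Set.Ioi (0:ℝ), Complex.exp (-w * t) * m t with hF
  set G : ℕ → ℂ → ℂ := fun l w => Complex.exp (-(c l : ℂ) * w) * w ^ (N l) with hG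
  have hdecomp : ∀ k, fwdDiff1 f z₀ k
      = fwdDiff1 F z₀ k + ∑ l ∈ Finset.range (j+1), b l * fwdDiff1 (G l) z₀ k := by
    intro k
    unfold fwdDiff1
    have hfi : ∀ i : ℕ, f (z₀ + (i:ℂ))
        = F (z₀ + (i:ℂ)) + ∑ l ∈ Finset.range (j+1), b l * G l (z₀ + (i:ℂ)) := by
      intro i
      have hre : z₀.re ≤ (z₀ + (i:ℂ)).re := by
        simp only [Complex.add_re, Complex.natCast_re]
        have : (0:ℝ) ≤ (i:ℝ) := Nat.cast_nonneg i
        linarith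
      rw [hf _ hre]
      congr 1
      exact Finset.sum_congr rfl fun l _ => by rw [hG]; ring
    rw [Finset.sum_congr rfl (fun i _ => by rw [hfi i])]
    simp only [mul_add, Finset.sum_add_distrib, Finset.mul_sum]
    congr 1
    rw [Finset.sum_comm]
    exact Finset.sum_congr rfl fun l _ => Finset.sum_congr rfl fun i _ => by ring
  have hsummand : ∀ k, genBinom u k * fwdDiff1 f z₀ k
      = genBinom u k * fwdDiff1 F z₀ k
        + ∑ l ∈ Finset.range (j+1), b l * (genBinom u k * fwdDiff1 (G l) z₀ k) := by
    intro k
    rw [hdecomp k, mul_add, Finset.mul_sum]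
    congr 1
    exact Finset.sum_congr rfl fun l _ => by ring
  have hsplit : ∀ n, ∑ k ∈ Finset.range n, genBinom u k * fwdDiff1 f z₀ k
      = (∑ k ∈ Finset.range n, genBinom u k * fwdDiff1 F z₀ k)
        + ∑ l ∈ Finset.range (j+1),
            b l * (∑ k ∈ Finset.range n, genBinom u k * fwdDiff1 (G l) z₀ k) := by
    intro n
    rw [Finset.sum_congr rfl (fun k _ => hsummand k), Finset.sum_add_distrib]
    congr 1
    rw [Finset.sum_comm]
    exact Finset.sum_congr rfl fun l _ => by rw [Finset.mul_sum]
  have hz0u : z₀ + u = z := by rw [hu]; ring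
  have hA := partA hm hint hure
  rw [hz0u] at hA
  have hB : ∀ l ∈ Finset.range (j+1),
      Tendsto (fun n : ℕ => ∑ k ∈ Finset.range n, genBinom u k * fwdDiff1 (G l) z₀ k)
        atTop (nhds (G l z)) := by
    intro l hl
    have hl' : l ≤ j := Nat.lt_succ_iff.mp (Finset.mem_range.mp hl)
    have hcl := (hc l hl').1
    have h0 := (hasSum_partB z₀ u hcl (N l)).tendsto_sum_nat
    rw [hz0u] at h0
    exact h0
  have hTend := hA.add (tendsto_finset_sum (Finset.range (j+1))
    (fun l hl => ((hB l hl).const_mul (b l))))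
  have hfz : F z + ∑ l ∈ Finset.range (j+1), b l * G l z = f z := by
    rw [hf z hz.le]
    congr 1
    exact Finset.sum_congr rfl fun l _ => by rw [hG]; ring
  have hfun : (fun n : ℕ => ∑ k ∈ Finset.range n, genBinom u k * fwdDiff1 f z₀ k)
      = fun n : ℕ => (∑ k ∈ Finset.range n, genBinom u k * fwdDiff1 F z₀ k)
        + ∑ l ∈ Finset.range (j+1),
            b l * (∑ k ∈ Finset.range n, genBinom u k * fwdDiff1 (G l) z₀ k) :=
    funext hsplit
  rw [hfun, ← hfz]
  exact hTend
end
end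

section
/- Let h > 0 be real. Let m : ℝ → ℂ be Lebesgue measurable and Lebesgue integrable, let j ∈ ℕ, let a₀,…,a_j ∈ ℂ, N₀,…,N_j ∈ ℕ, and c₀,…,c_j ∈ ℝ with c_k ∉ {1/(2h) + ν/h : ν ∈ ℤ} for every k. Suppose f : ℝ → ℂ satisfies f(w) = ∫_ℝ m(x) e^{-2πi w x} dx + ∑_{k=0}^{j} a_k e^{-2πi c_k w} (2πi w)^{N_k} for every w ∈ ℝ. Then for every y ∈ ℝ, lim_{n→∞} ∇_h^n[f](y) / 2^n = 0, i.e. ∇_h^n[f](y) = o(2^n). -/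
open MeasureTheory Filter Finset Topology

noncomputable section

private lemma sum_choose_neg_pow (z : ℂ) (n : ℕ) :
    ∑ k ∈ Finset.range (n + 1), (n.choose k : ℂ) * (-z) ^ k = (1 - z) ^ n := by
  have h := add_pow (-z) 1 n
  simp only [one_pow, mul_one] at h
  rw [show (1 : ℂ) - z = -z + 1 by ring, h]
  exact Finset.sum_congr rfl fun k _ => by ring

private def Sseq (z : ℂ) (p n : ℕ) : ℂ :=
  ∑ k ∈ Finset.range (n + 1), (n.choose k : ℂ) * (-z) ^ k * (k : ℂ) ^ p

private lemma Sseq_succ (z : ℂ) (p n : ℕ) :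
    Sseq z (p + 1) (n + 1) =
      (-((n : ℂ) + 1)) * z * ∑ q ∈ Finset.range (p + 1), (p.choose q : ℂ) * Sseq z q n := by
  have key : ∀ k : ℕ, (((n+1).choose (k+1) : ℂ)) * ((k : ℂ) + 1) = ((n : ℂ) + 1) * (n.choose k : ℂ) := by
    intro k
    have h := (Nat.add_one_mul_choose_eq n k).symm
    have h2 : (((n+1).choose (k+1) * (k+1) : ℕ) : ℂ) = ((Nat.succ n * n.choose k : ℕ) : ℂ) := by
      exact_mod_cast congrArg (fun t : ℕ => (t : ℂ)) h
    push_cast at h2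
    linear_combination h2
  unfold Sseq
  rw [Finset.sum_range_succ']
  have h0 : ((((n+1).choose 0 : ℕ) : ℂ)) * (-z) ^ 0 * ((0:ℕ) : ℂ) ^ (p+1) = 0 := by simp
  rw [h0, add_zero]
  have hb : ∀ k : ℕ, ((k : ℂ) + 1) ^ p = ∑ q ∈ Finset.range (p+1), (k : ℂ) ^ q * (p.choose q : ℂ) := by
    intro k
    have := add_pow (k : ℂ) 1 p
    simpa using this
  calc ∑ k ∈ Finset.range (n+1), (((n+1).choose (k+1) : ℂ)) * (-z) ^ (k+1) * (((k+1 : ℕ)) : ℂ) ^ (p+1)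
      = ∑ k ∈ Finset.range (n+1), ∑ q ∈ Finset.range (p+1),
          (-((n : ℂ) + 1)) * z * ((p.choose q : ℂ) * ((n.choose k : ℂ) * (-z) ^ k * (k : ℂ) ^ q)) := by
        refine Finset.sum_congr rfl fun k _ => ?_
        push_cast
        calc ((n+1).choose (k+1) : ℂ) * (-z) ^ (k+1) * ((k : ℂ) + 1) ^ (p+1)
            = (((n+1).choose (k+1) : ℂ) * ((k : ℂ) + 1)) * ((-z) ^ (k+1) * ((k : ℂ) + 1) ^ p) := by
              ring
          _ = (((n : ℂ) + 1) * (n.choose k : ℂ)) * ((-z) ^ (k+1) * ((k : ℂ) + 1) ^ p) := by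
              rw [key k]
          _ = ∑ q ∈ Finset.range (p+1),
                (-((n : ℂ) + 1)) * z * ((p.choose q : ℂ) * ((n.choose k : ℂ) * (-z) ^ k * (k : ℂ) ^ q)) := by
              rw [hb k, Finset.mul_sum, Finset.mul_sum]
              refine Finset.sum_congr rfl fun q _ => ?_
              rw [pow_succ]
              ring
    _ = (-((n : ℂ) + 1)) * z * ∑ q ∈ Finset.range (p+1), (p.choose q : ℂ) * Sseq z q n := by
        rw [Finset.sum_comm]
        rw [Finset.mul_sum]
        refine Finset.sum_congr rfl fun q _ => ?_
        simp only [Sseq, Finset.mul_sum]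

private lemma Sseq_bound (z : ℂ) (hz : ‖z‖ ≤ 1) (r : ℝ) (hr : 1 ≤ r) (h1 : ‖1 - z‖ ≤ r) (p : ℕ) :
    ∃ C : ℝ, 0 ≤ C ∧ ∀ q ≤ p, ∀ n : ℕ, ‖Sseq z q n‖ ≤ C * ((n : ℝ) + 1) ^ q * r ^ n := by
  have hr0 : (0:ℝ) < r := lt_of_lt_of_le one_pos hr
  induction p with
  | zero =>
    refine ⟨1, zero_le_one, fun q hq n => ?_⟩
    obtain rfl : q = 0 := Nat.le_zero.mp hq
    have : Sseq z 0 n = (1 - z) ^ n := by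
      rw [Sseq, ← sum_choose_neg_pow z n]
      exact Finset.sum_congr rfl fun k _ => by ring
    rw [this, norm_pow]
    simpa using pow_le_pow_left₀ (norm_nonneg _) h1 n
  | succ p ih =>
    obtain ⟨C, hC0, hC⟩ := ih
    refine ⟨C, hC0, fun q hq n => ?_⟩
    rcases Nat.lt_succ_iff_lt_or_eq.mp (Nat.lt_succ_of_le hq) with hq' | rfl
    · exact hC q (Nat.lt_succ_iff.mp hq') n
    · cases n with
      | zero => simp [Sseq]; positivity
      | succ n =>
        rw [Sseq_succ]
        have hsum : ‖∑ q ∈ Finset.range (p+1), (p.choose q : ℂ) * Sseq z q n‖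
            ≤ ∑ q ∈ Finset.range (p+1), (p.choose q : ℝ) * (C * ((n:ℝ)+1) ^ q * r ^ n) := by
          refine (norm_sum_le _ _).trans (Finset.sum_le_sum fun q hq' => ?_)
          rw [norm_mul]
          have hnc : ‖(p.choose q : ℂ)‖ = (p.choose q : ℝ) := by
            simp
          rw [hnc]
          exact mul_le_mul_of_nonneg_left
            (hC q (Nat.lt_succ_iff.mp (Finset.mem_range.mp hq')) n) (by positivity)
        have hsum2 : ∑ q ∈ Finset.range (p+1), (p.choose q : ℝ) * (C * ((n:ℝ)+1) ^ q * r ^ n)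
            = C * r ^ n * (((n:ℝ)+1)+1) ^ p := by
          have := add_pow ((n:ℝ)+1) 1 p
          simp only [one_pow, mul_one] at this
          rw [this, Finset.mul_sum]
          exact Finset.sum_congr rfl fun q _ => by ring
        rw [norm_mul, norm_mul, norm_neg]
        have hn1 : ‖((n : ℂ) + 1)‖ = (n : ℝ) + 1 := by
          rw [show ((n : ℂ) + 1) = ((n + 1 : ℕ) : ℂ) by push_cast; ring,
            Complex.norm_natCast]
          push_cast; ring
        rw [hn1]
        calc ((n:ℝ)+1) * ‖z‖ * ‖∑ q ∈ Finset.range (p+1), (p.choose q : ℂ) * Sseq z q n‖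
            ≤ ((n:ℝ)+1) * 1 * (C * r ^ n * (((n:ℝ)+1)+1) ^ p) := by
              refine mul_le_mul (mul_le_mul_of_nonneg_left hz (by positivity))
                (hsum.trans_eq hsum2) (norm_nonneg _) (by positivity)
          _ ≤ (((n:ℝ)+1)+1) * 1 * (C * (r ^ n * r) * (((n:ℝ)+1)+1) ^ p) := by
              have h2n : (r:ℝ) ^ n ≤ r ^ n * r := by
                nlinarith [pow_pos hr0 n]
              gcongr
              · linarith
          _ = C * ((((n+1:ℕ)):ℝ)+1) ^ (p+1) * r ^ (n+1) := by
              push_cast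
              ring

private lemma Sseq_tendsto (z : ℂ) (hz : ‖z‖ ≤ 1) (h1 : ‖1 - z‖ < 2) (p : ℕ) :
    Tendsto (fun n : ℕ => Sseq z p n / 2 ^ n) atTop (nhds 0) := by
  set r : ℝ := max ‖1 - z‖ 1 with hrdef
  have hr1 : 1 ≤ r := le_max_right _ _
  have hr0 : (0:ℝ) < r := lt_of_lt_of_le one_pos hr1
  have hr2 : r < 2 := max_lt h1 one_lt_two
  have hle : ‖1 - z‖ ≤ r := le_max_left _ _
  obtain ⟨C, hC0, hC⟩ := Sseq_bound z hz r hr1 hle p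
  have hq1 : ‖r / 2‖ < 1 := by
    rw [Real.norm_eq_abs, abs_of_pos (by linarith)]; linarith
  have hbase : Tendsto (fun n : ℕ => ((n:ℝ)) ^ p * (r/2) ^ n) atTop (nhds 0) :=
    (summable_pow_mul_geometric_of_norm_lt_one p hq1).tendsto_atTop_zero
  have hshift : Tendsto (fun n : ℕ => (((n+1 : ℕ)):ℝ) ^ p * (r/2) ^ (n+1)) atTop (nhds 0) :=
    hbase.comp (tendsto_add_atTop_nat 1)
  have hmain : Tendsto (fun n : ℕ => C * (2/r) * ((((n+1:ℕ)):ℝ) ^ p * (r/2) ^ (n+1))) atTop (nhds 0) := by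
    simpa using hshift.const_mul (C * (2/r))
  apply squeeze_zero_norm _ hmain
  intro n
  have hb := hC p le_rfl n
  calc ‖Sseq z p n / 2 ^ n‖ = ‖Sseq z p n‖ / 2 ^ n := by
        rw [norm_div, norm_pow]
        norm_num
    _ ≤ (C * ((n:ℝ)+1) ^ p * r ^ n) / 2 ^ n := by
        apply div_le_div_of_nonneg_right hb ?_ |>.trans_eq rfl
        · positivity
    _ = C * (2/r) * ((((n+1:ℕ)):ℝ) ^ p * (r/2) ^ (n+1)) := by
        push_cast
        rw [div_pow, pow_succ]
        field_simp
        ring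

private lemma norm_exp_unit (t : ℝ) : ‖Complex.exp ((t : ℂ) * Complex.I)‖ = 1 := by
  exact Complex.norm_exp_ofReal_mul_I t

private lemma exp_eq_neg_one_iff' (t : ℝ) :
    Complex.exp (2 * (Real.pi : ℂ) * Complex.I * (t : ℂ)) = -1 ↔ ∃ ν : ℤ, t = 1/2 + ν := by
  rw [show (-1 : ℂ) = Complex.exp ((Real.pi : ℂ) * Complex.I) from Complex.exp_pi_mul_I.symm]
  rw [Complex.exp_eq_exp_iff_exists_int]
  constructor
  · rintro ⟨ν, hν⟩
    refine ⟨ν, ?_⟩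
    have hI : ((2 * Real.pi * t : ℝ) : ℂ) * Complex.I
        = ((Real.pi + ν * (2 * Real.pi) : ℝ) : ℂ) * Complex.I := by
      push_cast
      push_cast at hν
      linear_combination hν
    have h2 : ((2 * Real.pi * t : ℝ) : ℂ) = ((Real.pi + ν * (2 * Real.pi) : ℝ) : ℂ) :=
      mul_right_cancel₀ Complex.I_ne_zero hI
    have h3 : 2 * Real.pi * t = Real.pi + ν * (2 * Real.pi) := by exact_mod_cast h2
    have hπ : Real.pi ≠ 0 := Real.pi_ne_zero
    have h4 : Real.pi * (2 * t) = Real.pi * (1 + 2 * ν) := by linarith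
    have h5 := mul_left_cancel₀ hπ h4
    linarith
  · rintro ⟨ν, rfl⟩
    refine ⟨ν, ?_⟩
    push_cast
    ring

private lemma norm_one_sub_lt_two {u : ℂ} (hu : ‖u‖ = 1) (hne : u ≠ -1) : ‖1 - u‖ < 2 := by
  have habs : ‖u‖ = 1 := hu
  have hsq : u.re ^ 2 + u.im ^ 2 = 1 := by
    have h := Complex.sq_norm u
    rw [habs] at h
    simpa [Complex.normSq_apply, sq] using h.symm
  have hre : -1 < u.re := by
    rcases lt_or_eq_of_le (neg_le_of_abs_le ((Complex.abs_re_le_norm u).trans_eq habs)) with h | h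
    · exact h
    · exfalso; apply hne
      have him : u.im = 0 := by nlinarith
      exact Complex.ext (by simp [← h]) (by simp [him])
  have h2 : ‖1 - u‖ ^ 2 < 2 ^ 2 := by
    have h := Complex.sq_norm (1 - u)
    rw [h]
    simp only [Complex.normSq_apply, Complex.sub_re, Complex.sub_im, Complex.one_re,
      Complex.one_im]
    nlinarith
  exact lt_of_pow_lt_pow_left₀ 2 (by norm_num) h2

private lemma partB (h : ℝ) (hh : 0 < h) (a : ℂ) (N : ℕ) (c : ℝ)
    (hc : ¬ ∃ ν : ℤ, c = 1 / (2 * h) + (ν : ℝ) / h) (y : ℝ) :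
    Tendsto (fun n : ℕ =>
      (∑ k ∈ Finset.range (n + 1), (n.choose k : ℂ) * (-1) ^ k *
        (a * Complex.exp (-2 * (Real.pi : ℂ) * Complex.I * (c : ℂ) * ((y - (k:ℝ)*h : ℝ) : ℂ))
          * (2 * (Real.pi : ℂ) * Complex.I * ((y - (k:ℝ)*h : ℝ) : ℂ)) ^ N)) / 2 ^ n)
      atTop (nhds 0) := by
  set z : ℂ := Complex.exp (2 * (Real.pi : ℂ) * Complex.I * ((c * h : ℝ) : ℂ)) with hzdef
  set E : ℂ := Complex.exp (-2 * (Real.pi : ℂ) * Complex.I * (c : ℂ) * (y : ℂ)) with hEdef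
  have hznorm : ‖z‖ = 1 := by
    rw [hzdef, show 2 * (Real.pi : ℂ) * Complex.I * ((c * h : ℝ) : ℂ)
      = ((2 * Real.pi * (c * h) : ℝ) : ℂ) * Complex.I by push_cast; ring]
    exact norm_exp_unit _
  have hzne : z ≠ -1 := by
    intro hzeq
    obtain ⟨ν, hν⟩ := (exp_eq_neg_one_iff' (c * h)).mp hzeq
    apply hc
    refine ⟨ν, ?_⟩
    field_simp at hν ⊢
    linear_combination hν
  have h1z : ‖1 - z‖ < 2 := norm_one_sub_lt_two hznorm hzne
  set coef : ℕ → ℂ := fun p =>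
    a * E * (2 * (Real.pi : ℂ) * Complex.I) ^ N * (-(h:ℂ)) ^ p * (y:ℂ) ^ (N - p)
      * (N.choose p : ℂ) with hcoef
  have hterm : ∀ n k : ℕ, (n.choose k : ℂ) * (-1) ^ k *
      (a * Complex.exp (-2 * (Real.pi : ℂ) * Complex.I * (c : ℂ) * ((y - (k:ℝ)*h : ℝ) : ℂ))
        * (2 * (Real.pi : ℂ) * Complex.I * ((y - (k:ℝ)*h : ℝ) : ℂ)) ^ N)
      = ∑ p ∈ Finset.range (N + 1), coef p * ((n.choose k : ℂ) * (-z) ^ k * (k : ℂ) ^ p) := by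
    intro n k
    have hexp : Complex.exp (-2 * (Real.pi : ℂ) * Complex.I * (c : ℂ) * ((y - (k:ℝ)*h : ℝ) : ℂ))
        = E * z ^ k := by
      rw [hEdef, hzdef, ← Complex.exp_nat_mul, ← Complex.exp_add]
      congr 1
      push_cast
      ring
    have hpow : ((y - (k:ℝ)*h : ℝ) : ℂ) = -((h:ℂ) * (k:ℂ)) + (y:ℂ) := by push_cast; ring
    rw [hexp, hpow, mul_pow (2 * (Real.pi : ℂ) * Complex.I), add_pow]
    simp only [Finset.mul_sum, hcoef]
    refine Finset.sum_congr rfl fun p _ => ?_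
    ring
  have hswap : ∀ n : ℕ, (∑ k ∈ Finset.range (n + 1), (n.choose k : ℂ) * (-1) ^ k *
      (a * Complex.exp (-2 * (Real.pi : ℂ) * Complex.I * (c : ℂ) * ((y - (k:ℝ)*h : ℝ) : ℂ))
        * (2 * (Real.pi : ℂ) * Complex.I * ((y - (k:ℝ)*h : ℝ) : ℂ)) ^ N)) / 2 ^ n
      = ∑ p ∈ Finset.range (N + 1), coef p * (Sseq z p n / 2 ^ n) := by
    intro n
    rw [show (∑ k ∈ Finset.range (n + 1), (n.choose k : ℂ) * (-1) ^ k *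
      (a * Complex.exp (-2 * (Real.pi : ℂ) * Complex.I * (c : ℂ) * ((y - (k:ℝ)*h : ℝ) : ℂ))
        * (2 * (Real.pi : ℂ) * Complex.I * ((y - (k:ℝ)*h : ℝ) : ℂ)) ^ N))
      = ∑ p ∈ Finset.range (N + 1), coef p * Sseq z p n by
        rw [Finset.sum_congr rfl fun k _ => hterm n k, Finset.sum_comm]
        exact Finset.sum_congr rfl fun p _ => by rw [Sseq, Finset.mul_sum]]
    rw [Finset.sum_div]
    exact Finset.sum_congr rfl fun p _ => (mul_div_assoc _ _ _)
  have := tendsto_finset_sum (Finset.range (N + 1))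
    (fun p _ => ((Sseq_tendsto z (le_of_eq hznorm) h1z p).const_mul (coef p)))
  simp only [mul_zero, Finset.sum_const_zero] at this
  exact Tendsto.congr (fun n => (hswap n).symm) this

private lemma partA_s8 (h : ℝ) (hh : 0 < h) (m : ℝ → ℂ) (hm : Measurable m) (hmi : Integrable m)
    (y : ℝ) :
    Tendsto (fun n : ℕ =>
      (∑ k ∈ Finset.range (n + 1), (n.choose k : ℂ) * (-1) ^ k *
        ∫ x : ℝ, m x * Complex.exp (-2 * (Real.pi : ℂ) * Complex.I * ((y - (k:ℝ)*h : ℝ) : ℂ) * (x : ℂ))) / 2 ^ n)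
      atTop (nhds 0) := by
  set u : ℝ → ℂ := fun x => Complex.exp (2 * (Real.pi : ℂ) * Complex.I * ((h * x : ℝ) : ℂ)) with hudef
  set e : ℝ → ℂ := fun x => Complex.exp (-2 * (Real.pi : ℂ) * Complex.I * (y : ℂ) * (x : ℂ)) with hedef
  have hunorm : ∀ x : ℝ, ‖u x‖ = 1 := fun x => by
    show ‖Complex.exp (2 * (Real.pi : ℂ) * Complex.I * ((h * x : ℝ) : ℂ))‖ = 1
    rw [show 2 * (Real.pi : ℂ) * Complex.I * ((h * x : ℝ) : ℂ)
      = ((2 * Real.pi * (h * x) : ℝ) : ℂ) * Complex.I by push_cast; ring]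
    exact norm_exp_unit _
  have henorm : ∀ x : ℝ, ‖e x‖ = 1 := fun x => by
    show ‖Complex.exp (-2 * (Real.pi : ℂ) * Complex.I * (y : ℂ) * (x : ℂ))‖ = 1
    rw [show -2 * (Real.pi : ℂ) * Complex.I * (y : ℂ) * (x : ℂ)
      = ((-2 * Real.pi * y * x : ℝ) : ℂ) * Complex.I by push_cast; ring]
    exact norm_exp_unit _
  have hwnorm : ∀ w x : ℝ, ‖Complex.exp (-2 * (Real.pi : ℂ) * Complex.I * (w : ℂ) * (x : ℂ))‖ = 1 := by
    intro w x
    rw [show -2 * (Real.pi : ℂ) * Complex.I * (w : ℂ) * (x : ℂ)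
      = ((-2 * Real.pi * w * x : ℝ) : ℂ) * Complex.I by push_cast; ring]
    exact norm_exp_unit _
  have hint : ∀ w : ℝ, Integrable
      (fun x : ℝ => m x * Complex.exp (-2 * (Real.pi : ℂ) * Complex.I * (w : ℂ) * (x : ℂ))) := by
    intro w
    have hb : Integrable (fun x : ℝ =>
        Complex.exp (-2 * (Real.pi : ℂ) * Complex.I * (w : ℂ) * (x : ℂ)) * m x) :=
      hmi.bdd_mul (Continuous.aestronglyMeasurable (by fun_prop))
        (c := 1) (Eventually.of_forall fun x => le_of_eq (hwnorm w x))
    exact hb.congr (Eventually.of_forall fun x => mul_comm _ _)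
  have hident : ∀ n : ℕ,
      (∑ k ∈ Finset.range (n + 1), (n.choose k : ℂ) * (-1) ^ k *
        ∫ x : ℝ, m x * Complex.exp (-2 * (Real.pi : ℂ) * Complex.I * ((y - (k:ℝ)*h : ℝ) : ℂ) * (x : ℂ))) / 2 ^ n
      = ∫ x : ℝ, m x * e x * ((1 - u x) / 2) ^ n := by
    intro n
    have step1 : ∀ k ∈ Finset.range (n + 1), (n.choose k : ℂ) * (-1) ^ k *
        ∫ x : ℝ, m x * Complex.exp (-2 * (Real.pi : ℂ) * Complex.I * ((y - (k:ℝ)*h : ℝ) : ℂ) * (x : ℂ))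
        = ∫ x : ℝ, (n.choose k : ℂ) * (-1) ^ k *
            (m x * Complex.exp (-2 * (Real.pi : ℂ) * Complex.I * ((y - (k:ℝ)*h : ℝ) : ℂ) * (x : ℂ))) :=
      fun k _ => (integral_const_mul _ _).symm
    have hsum : (∑ k ∈ Finset.range (n + 1), (n.choose k : ℂ) * (-1) ^ k *
        ∫ x : ℝ, m x * Complex.exp (-2 * (Real.pi : ℂ) * Complex.I * ((y - (k:ℝ)*h : ℝ) : ℂ) * (x : ℂ)))
        = ∫ x : ℝ, ∑ k ∈ Finset.range (n + 1), (n.choose k : ℂ) * (-1) ^ k *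
            (m x * Complex.exp (-2 * (Real.pi : ℂ) * Complex.I * ((y - (k:ℝ)*h : ℝ) : ℂ) * (x : ℂ))) := by
      rw [Finset.sum_congr rfl step1]
      exact (integral_finset_sum (Finset.range (n + 1))
        (f := fun (k : ℕ) (x : ℝ) => (n.choose k : ℂ) * (-1) ^ k *
          (m x * Complex.exp (-2 * (Real.pi : ℂ) * Complex.I * ((y - (k:ℝ)*h : ℝ) : ℂ) * (x : ℂ))))
        (fun k _ => (hint (y - (k:ℝ)*h)).const_mul ((n.choose k : ℂ) * (-1) ^ k))).symm
    rw [hsum, ← integral_div]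
    refine integral_congr_ae (Eventually.of_forall fun x => ?_)
    have hexpk : ∀ k : ℕ,
        Complex.exp (-2 * (Real.pi : ℂ) * Complex.I * ((y - (k:ℝ)*h : ℝ) : ℂ) * (x : ℂ))
        = e x * (u x) ^ k := by
      intro k
      rw [hedef, hudef]
      simp only []
      rw [← Complex.exp_nat_mul, ← Complex.exp_add]
      congr 1
      push_cast
      ring
    have hs : ∑ k ∈ Finset.range (n + 1), (n.choose k : ℂ) * (-1) ^ k *
        (m x * Complex.exp (-2 * (Real.pi : ℂ) * Complex.I * ((y - (k:ℝ)*h : ℝ) : ℂ) * (x : ℂ)))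
        = m x * e x * (1 - u x) ^ n := by
      rw [← sum_choose_neg_pow (u x) n, Finset.mul_sum]
      refine Finset.sum_congr rfl fun k _ => ?_
      rw [hexpk k]
      ring
    simp only []
    rw [hs, div_pow]
    ring
  have hae : ∀ᵐ x : ℝ, u x ≠ -1 := by
    have hcount : Set.Countable {x : ℝ | u x = -1} := by
      refine (Set.countable_range (fun ν : ℤ => ((1:ℝ)/2 + ν)/h)).mono ?_
      intro x hx
      obtain ⟨ν, hν⟩ := (exp_eq_neg_one_iff' (h * x)).mp hx
      refine ⟨ν, ?_⟩
      show ((1:ℝ)/2 + ν)/h = x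
      rw [div_eq_iff (ne_of_gt hh)]
      linarith
    have hmeas0 := hcount.measure_zero volume
    rw [ae_iff]
    simpa [not_not] using hmeas0
  have hconv := tendsto_integral_of_dominated_convergence (μ := volume)
    (F := fun n x => m x * e x * ((1 - u x) / 2) ^ n) (f := fun _ => (0:ℂ))
    (bound := fun x => ‖m x‖)
    (fun n => ((hm.aestronglyMeasurable.mul
      (Continuous.aestronglyMeasurable (by fun_prop))).mul
      (Continuous.aestronglyMeasurable (by fun_prop))))
    hmi.norm
    (fun n => Eventually.of_forall fun x => by
      rw [norm_mul, norm_mul, henorm, mul_one, norm_pow]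
      have h2 : ‖(1 - u x) / 2‖ ≤ 1 := by
        rw [norm_div]
        have := norm_sub_le (1:ℂ) (u x)
        rw [norm_one, hunorm x] at this
        simp only [Complex.norm_ofNat]
        linarith
      calc ‖m x‖ * ‖(1 - u x) / 2‖ ^ n ≤ ‖m x‖ * 1 :=
            mul_le_mul_of_nonneg_left (pow_le_one₀ (norm_nonneg _) h2) (norm_nonneg _)
        _ = ‖m x‖ := mul_one _)
    (by
      filter_upwards [hae] with x hx
      have hlt : ‖(1 - u x) / 2‖ < 1 := by
        rw [norm_div]
        have := norm_one_sub_lt_two (hunorm x) hx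
        simp only [Complex.norm_ofNat]
        linarith
      have := (tendsto_pow_atTop_nhds_zero_of_norm_lt_one hlt).const_mul (m x * e x)
      simpa using this)
  simpa [integral_zero] using Tendsto.congr (fun n => (hident n).symm) hconv

theorem backward_differences_little_o_two_pow
    (h : ℝ) (hh : 0 < h)
    (m : ℝ → ℂ) (hm : Measurable m) (hmi : Integrable m)
    (j : ℕ) (a : ℕ → ℂ) (N : ℕ → ℕ) (c : ℕ → ℝ)
    (hc : ∀ k ≤ j, ¬ ∃ ν : ℤ, c k = 1 / (2 * h) + (ν : ℝ) / h)
    (f : ℝ → ℂ)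
    (hf : ∀ w : ℝ,
      f w = (∫ x : ℝ, m x * Complex.exp (-2 * (Real.pi : ℂ) * Complex.I * (w : ℂ) * (x : ℂ)))
        + ∑ k ∈ Finset.range (j + 1),
            a k * Complex.exp (-2 * (Real.pi : ℂ) * Complex.I * (c k : ℂ) * (w : ℂ))
              * (2 * (Real.pi : ℂ) * Complex.I * (w : ℂ)) ^ (N k))
    (y : ℝ) :
    Tendsto (fun n : ℕ =>
        (∑ k ∈ Finset.range (n + 1),
          (n.choose k : ℂ) * (-1) ^ k * f (y - (k : ℝ) * h)) / 2 ^ n)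
      atTop (nhds 0) := by
  have key : (fun n : ℕ => (∑ k ∈ Finset.range (n + 1),
        (n.choose k : ℂ) * (-1) ^ k * f (y - (k : ℝ) * h)) / 2 ^ n)
      = (fun n : ℕ =>
        (∑ k ∈ Finset.range (n + 1), (n.choose k : ℂ) * (-1) ^ k *
          ∫ x : ℝ, m x * Complex.exp (-2 * (Real.pi : ℂ) * Complex.I * ((y - (k:ℝ)*h : ℝ) : ℂ) * (x : ℂ))) / 2 ^ n
        + ∑ i ∈ Finset.range (j + 1),
          (∑ k ∈ Finset.range (n + 1), (n.choose k : ℂ) * (-1) ^ k *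
            (a i * Complex.exp (-2 * (Real.pi : ℂ) * Complex.I * (c i : ℂ) * ((y - (k:ℝ)*h : ℝ) : ℂ))
              * (2 * (Real.pi : ℂ) * Complex.I * ((y - (k:ℝ)*h : ℝ) : ℂ)) ^ (N i))) / 2 ^ n) := by
    funext n
    have hsplit : ∀ k : ℕ, (n.choose k : ℂ) * (-1) ^ k * f (y - (k : ℝ) * h)
        = (n.choose k : ℂ) * (-1) ^ k *
            (∫ x : ℝ, m x * Complex.exp (-2 * (Real.pi : ℂ) * Complex.I * ((y - (k:ℝ)*h : ℝ) : ℂ) * (x : ℂ)))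
          + ∑ i ∈ Finset.range (j + 1), (n.choose k : ℂ) * (-1) ^ k *
            (a i * Complex.exp (-2 * (Real.pi : ℂ) * Complex.I * (c i : ℂ) * ((y - (k:ℝ)*h : ℝ) : ℂ))
              * (2 * (Real.pi : ℂ) * Complex.I * ((y - (k:ℝ)*h : ℝ) : ℂ)) ^ (N i)) := by
      intro k
      rw [hf (y - (k:ℝ)*h), mul_add, Finset.mul_sum]
    rw [Finset.sum_congr rfl (fun k _ => hsplit k), Finset.sum_add_distrib, add_div,
      Finset.sum_comm, Finset.sum_div]
    congr 1
    rw [Finset.sum_div]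
  rw [key]
  have hA := partA_s8 h hh m hm hmi y
  have hB : Tendsto (fun n : ℕ => ∑ i ∈ Finset.range (j + 1),
      (∑ k ∈ Finset.range (n + 1), (n.choose k : ℂ) * (-1) ^ k *
        (a i * Complex.exp (-2 * (Real.pi : ℂ) * Complex.I * (c i : ℂ) * ((y - (k:ℝ)*h : ℝ) : ℂ))
          * (2 * (Real.pi : ℂ) * Complex.I * ((y - (k:ℝ)*h : ℝ) : ℂ)) ^ (N i))) / 2 ^ n)
      atTop (nhds 0) := by
    have := tendsto_finset_sum (Finset.range (j + 1)) (fun i hi =>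
      partB h hh (a i) (N i) (c i) (hc i (Nat.lt_succ_iff.mp (Finset.mem_range.mp hi))) y)
    simpa using this
  simpa using hA.add hB
end
end
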